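/- Let n : ℕ and i : ℕ with i + 2 < n. Let 𝔯_i be the endomorphism of FreeGroup (Fin n) determined on generators by x_i ↦ x_{i+1} * x_i * x_{i+1}⁻¹, x_{i+1} ↦ x_i, and x_k ↦ x_k for k ∉ {i, i+1}; let 𝔰_i be the endomorphism determined by x_i ↦ x_{i+1}, x_{i+1} ↦ x_i, x_k ↦ x_k otherwise; define 𝔯_{i+1} and 𝔰_{i+1} analogously with i replaced by i+1. Then 𝔰_i ∘ 𝔰_{i+1} ∘ 𝔯_i = 𝔯_{i+1} ∘ 𝔰_i ∘ 𝔰_{i+1} as monoid homomorphisms FreeGroup (Fin n) → FreeGroup (Fin n). -/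
import Mathlib

noncomputable section

/-- The endomorphism 𝔯_i of the free group on `n` generators:
`x_i ↦ x_{i+1} x_i x_{i+1}⁻¹`, `x_{i+1} ↦ x_i`, other generators fixed. -/
def rmap (n i : ℕ) (h : i + 1 < n) : FreeGroup (Fin n) →* FreeGroup (Fin n) :=
  FreeGroup.lift (fun j : Fin n =>
    if j.val = i then
      FreeGroup.of (⟨i + 1, h⟩ : Fin n) * FreeGroup.of (⟨i, Nat.lt_of_succ_lt h⟩ : Fin n) *
        (FreeGroup.of (⟨i + 1, h⟩ : Fin n))⁻¹
    else if j.val = i + 1 then FreeGroup.of (⟨i, Nat.lt_of_succ_lt h⟩ : Fin n)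
    else FreeGroup.of j)

/-- The endomorphism 𝔰_i of the free group on `n` generators:
`x_i ↦ x_{i+1}`, `x_{i+1} ↦ x_i`, other generators fixed. -/
def smap (n i : ℕ) (h : i + 1 < n) : FreeGroup (Fin n) →* FreeGroup (Fin n) :=
  FreeGroup.lift (fun j : Fin n =>
    if j.val = i then FreeGroup.of (⟨i + 1, h⟩ : Fin n)
    else if j.val = i + 1 then FreeGroup.of (⟨i, Nat.lt_of_succ_lt h⟩ : Fin n)
    else FreeGroup.of j)

theorem stmt15 (n i : ℕ) (h : i + 2 < n) :
    (smap n i (by omega)).comp ((smap n (i + 1) (by omega)).comp (rmap n i (by omega))) =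
      (rmap n (i + 1) (by omega)).comp
        ((smap n i (by omega)).comp (smap n (i + 1) (by omega))) := by
  ext j
  rcases j with ⟨v, hv⟩
  simp only [MonoidHom.comp_apply, rmap, smap, FreeGroup.lift_apply_of]
  rcases eq_or_ne v i with rfl | h1
  · simp [FreeGroup.lift_apply_of, show ¬ v = v + 1 + 1 by omega, show ¬ v + 1 + 1 = v by omega,
      show ¬ v + 1 = v by omega, show ¬ v = v + 1 by omega]
  rcases eq_or_ne v (i+1) with rfl | h2
  · simp [FreeGroup.lift_apply_of, show ¬ i = i + 1 + 1 by omega, show ¬ i + 1 + 1 = i by omega,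
      show ¬ i + 1 = i by omega, show ¬ i = i + 1 by omega]
  rcases eq_or_ne v (i+2) with rfl | h3
  · simp [FreeGroup.lift_apply_of, show ¬ i = i + 1 + 1 by omega, show ¬ i + 1 + 1 = i by omega,
      show ¬ i + 1 = i by omega, show ¬ i = i + 1 by omega]
  · simp [FreeGroup.lift_apply_of, h1, h2, h3, show ¬ v = i + 1 + 1 by omega]
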